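/- arXiv:2501.18410 — 17 statements merged into one kernel-verified Lean document; each statement's English description precedes it below -/
import Mathlib

section
/- Let F be a field of characteristic 0 and let A be an F-vector space equipped with a commutative associative bilinear product ·, a Lie bracket [,], and an F-linear map D : A → A that is a derivation of both products (D(a·b) = D(a)·b + a·D(b) and D([a,b]) = [D(a),b] + [a,D(b)]). If (A,·,[,],D) satisfies both the generalized Poisson compatibility identity [a·b,c] = a·[b,c] + [a,c]·b + a·b·D(c) and the transposed Poisson compatibility identity 2 a·[b,c] = [a·b,c] + [b,a·c] for all a,b,c ∈ A, then a·[b,c] = a·D(b)·c − a·b·D(c) and [a·b,c] = D(a)·b·c + a·D(b)·c − a·b·D(c) hold for all a,b,c ∈ A. -/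
theorem stmt_0 (F : Type*) [Field F] [CharZero F]
    (A : Type*) [AddCommGroup A] [Module F A]
    (mul br : A →ₗ[F] A →ₗ[F] A) (D : A →ₗ[F] A)
    (hcomm : ∀ a b : A, mul a b = mul b a)
    (hassoc : ∀ a b c : A, mul (mul a b) c = mul a (mul b c))
    (hanti : ∀ a b : A, br a b = - br b a)
    (hjac : ∀ a b c : A, br (br a b) c + br (br b c) a + br (br c a) b = 0)
    (hDmul : ∀ a b : A, D (mul a b) = mul (D a) b + mul a (D b))
    (hDbr : ∀ a b : A, D (br a b) = br (D a) b + br a (D b))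
    (hGP : ∀ a b c : A, br (mul a b) c =
      mul a (br b c) + mul (br a c) b + mul (mul a b) (D c))
    (hTP : ∀ a b c : A, (2 : F) • mul a (br b c) = br (mul a b) c + br b (mul a c))
    :
    (∀ a b c : A, mul a (br b c) = mul (mul a (D b)) c - mul (mul a b) (D c)) ∧
    (∀ a b c : A, br (mul a b) c =
      mul (mul (D a) b) c + mul (mul a (D b)) c - mul (mul a b) (D c)) := by
  -- reorder of triple products
  have hmc : ∀ x y z : A, mul (mul x y) z = mul (mul x z) y := by
    intro x y z
    rw [hassoc, hcomm y z, ← hassoc]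
  -- key consequence of combining hTP and hGP
  have hS : ∀ a b c : A, mul (br a c) b - mul (br a b) c
      = mul (mul a c) (D b) - mul (mul a b) (D c) := by
    intro a b c
    have h1 := hTP a b c
    rw [two_smul, hGP a b c] at h1
    have h2 : br b (mul a c)
        = - (mul a (br c b) + mul (br a b) c + mul (mul a c) (D b)) := by
      rw [hanti b (mul a c), hGP a c b]
    have h3 : mul a (br c b) = - mul a (br b c) := by
      rw [hanti c b]; exact map_neg (mul a) _
    rw [h2, h3] at h1
    calc mul (br a c) b - mul (br a b) c
        = (mul a (br b c) + mul (br a c) b + mul (mul a b) (D c)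
            + -(- mul a (br b c) + mul (br a b) c + mul (mul a c) (D b)))
          - (mul a (br b c) + mul a (br b c))
          + (mul (mul a c) (D b) - mul (mul a b) (D c)) := by abel
      _ = mul (mul a c) (D b) - mul (mul a b) (D c) := by rw [← h1]; abel
  -- first identity
  have hfst : ∀ a b c : A, mul a (br b c)
      = mul (mul a c) (D b) - mul (mul a b) (D c) := by
    intro a b c
    have q1 := hS b a c
    rw [hcomm (br b c) a, hcomm (br b a) c, hcomm b a] at q1
    have e1 : mul c (br b a) = - mul c (br a b) := by
      rw [hanti b a]; exact map_neg (mul c) _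
    rw [e1] at q1
    -- q1 : mul a (br b c) - - mul c (br a b) = mul (mul b c) (D a) - mul (mul a b) (D c)
    have q2 := hS c a b
    rw [hcomm (br c b) a, hcomm (br c a) b, hcomm c b, hcomm c a] at q2
    have e2 : mul a (br c b) = - mul a (br b c) := by
      rw [hanti c b]; exact map_neg (mul a) _
    have e3 : mul b (br c a) = - mul b (br a c) := by
      rw [hanti c a]; exact map_neg (mul b) _
    rw [e2, e3] at q2
    -- q2 : - mul a (br b c) - - mul b (br a c) = mul (mul b c) (D a) - mul (mul a c) (D b)
    have q3 := hS a b c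
    rw [hcomm (br a c) b, hcomm (br a b) c] at q3
    -- q3 : mul b (br a c) - mul c (br a b) = mul (mul a c) (D b) - mul (mul a b) (D c)
    have hcomb : (2 : F) • mul a (br b c)
        = (2 : F) • (mul (mul a c) (D b) - mul (mul a b) (D c)) := by
      rw [two_smul, two_smul]
      calc mul a (br b c) + mul a (br b c)
          = (mul a (br b c) - - mul c (br a b))
            - (- mul a (br b c) - - mul b (br a c))
            + (mul b (br a c) - mul c (br a b)) := by abel
        _ = (mul (mul b c) (D a) - mul (mul a b) (D c))
            - (mul (mul b c) (D a) - mul (mul a c) (D b))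
            + (mul (mul a c) (D b) - mul (mul a b) (D c)) := by rw [q1, q2, q3]
        _ = (mul (mul a c) (D b) - mul (mul a b) (D c))
            + (mul (mul a c) (D b) - mul (mul a b) (D c)) := by abel
    exact smul_right_injective A (two_ne_zero) hcomb
  constructor
  · intro a b c
    rw [hfst a b c, ← hmc a (D b) c]
  · intro a b c
    rw [hGP a b c, hfst a b c, hcomm (br a c) b, hfst b a c]
    have e1 : mul (mul (D a) b) c = mul (mul b c) (D a) := by
      rw [hcomm (D a) b, hmc b (D a) c]
    have e2 : mul (mul a (D b)) c = mul (mul a c) (D b) := hmc a (D b) c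
    rw [e1, e2, hcomm b a]
    abel
end

section
/- Let F be a field of characteristic 0 and let A be an F-vector space equipped with a commutative associative bilinear product ·, a Lie bracket [,], and an F-linear map D : A → A that is a derivation of both products (D(a·b) = D(a)·b + a·D(b) and D([a,b]) = [D(a),b] + [a,D(b)]). If a·[b,c] = a·D(b)·c − a·b·D(c) and [a·b,c] = D(a)·b·c + a·D(b)·c − a·b·D(c) hold for all a,b,c ∈ A, then (A,·,[,],D) satisfies both the generalized Poisson compatibility identity [a·b,c] = a·[b,c] + [a,c]·b + a·b·D(c) and the transposed Poisson compatibility identity 2 a·[b,c] = [a·b,c] + [b,a·c] for all a,b,c ∈ A. -/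
theorem stmt_1 (F : Type*) [Field F] [CharZero F]
    (A : Type*) [AddCommGroup A] [Module F A]
    (mul br : A →ₗ[F] A →ₗ[F] A) (D : A →ₗ[F] A)
    (hcomm : ∀ a b : A, mul a b = mul b a)
    (hassoc : ∀ a b c : A, mul (mul a b) c = mul a (mul b c))
    (hanti : ∀ a b : A, br a b = - br b a)
    (hjac : ∀ a b c : A, br (br a b) c + br (br b c) a + br (br c a) b = 0)
    (hDmul : ∀ a b : A, D (mul a b) = mul (D a) b + mul a (D b))
    (hDbr : ∀ a b : A, D (br a b) = br (D a) b + br a (D b))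
    (hid1 : ∀ a b c : A, mul a (br b c) = mul (mul a (D b)) c - mul (mul a b) (D c))
    (hid2 : ∀ a b c : A, br (mul a b) c =
      mul (mul (D a) b) c + mul (mul a (D b)) c - mul (mul a b) (D c)) :
    (∀ a b c : A, br (mul a b) c =
      mul a (br b c) + mul (br a c) b + mul (mul a b) (D c)) ∧
    (∀ a b c : A, (2 : F) • mul a (br b c) = br (mul a b) c + br b (mul a c)) := by
  constructor
  · intro a b c
    rw [hid2, hid1, hcomm (br a c) b, hid1 b a c, hcomm b (D a), hcomm b a]
    abel
  · intro a b c
    rw [two_smul, hid1, hid2, hanti b (mul a c), hid2 a c b,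
      hassoc (D a) b c, hcomm b c, ← hassoc (D a) c b,
      hassoc a (D c) b, hcomm (D c) b, ← hassoc a b (D c),
      hassoc a c (D b), hcomm c (D b), ← hassoc a (D b) c]
    abel
end

section
/- Let F be a field of characteristic 0, let (A,·) be a commutative associative F-algebra, and let D : A → A be an F-linear derivation (D(a·b) = D(a)·b + a·D(b)). Define [a,b] = D(a)·b − a·D(b) for all a,b ∈ A. Then: (i) [,] is bilinear, antisymmetric, and satisfies the Jacobi identity [[a,b],c] + [[b,c],a] + [[c,a],b] = 0; (ii) D is a derivation of the bracket, D([a,b]) = [D(a),b] + [a,D(b)]; (iii) the generalized Poisson compatibility identity [a·b,c] = a·[b,c] + [a,c]·b + a·b·D(c) holds for all a,b,c ∈ A; and (iv) the transposed Poisson compatibility identity 2 a·[b,c] = [a·b,c] + [b,a·c] holds for all a,b,c ∈ A. -/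
theorem stmt_2 (F : Type*) [Field F] [CharZero F]
    (A : Type*) [AddCommGroup A] [Module F A]
    (mul : A →ₗ[F] A →ₗ[F] A) (D : A →ₗ[F] A)
    (hcomm : ∀ a b : A, mul a b = mul b a)
    (hassoc : ∀ a b c : A, mul (mul a b) c = mul a (mul b c))
    (hDmul : ∀ a b : A, D (mul a b) = mul (D a) b + mul a (D b))
    (br : A → A → A)
    (hbr : ∀ a b : A, br a b = mul (D a) b - mul a (D b)) :
    (∀ a b c : A, br (a + b) c = br a c + br b c) ∧
    (∀ (t : F) (a b : A), br (t • a) b = t • br a b) ∧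
    (∀ a b c : A, br a (b + c) = br a b + br a c) ∧
    (∀ (t : F) (a b : A), br a (t • b) = t • br a b) ∧
    (∀ a b : A, br a b = - br b a) ∧
    (∀ a b c : A, br (br a b) c + br (br b c) a + br (br c a) b = 0) ∧
    (∀ a b : A, D (br a b) = br (D a) b + br a (D b)) ∧
    (∀ a b c : A, br (mul a b) c =
      mul a (br b c) + mul (br a c) b + mul (mul a b) (D c)) ∧
    (∀ a b c : A, (2 : F) • mul a (br b c) = br (mul a b) c + br b (mul a c)) := by
  have rot : ∀ x y z : A, mul (mul x y) z = mul (mul y z) x := by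
    intro x y z; rw [hassoc, hcomm]
  have sw : ∀ x y z : A, mul (mul x y) z = mul (mul x z) y := by
    intro x y z; rw [hassoc, hcomm y z, ← hassoc]
  have hD : ∀ a b : A, D (br a b) = mul (D (D a)) b - mul a (D (D b)) := by
    intro a b
    simp only [hbr, map_sub, hDmul]
    abel
  have hDbr : ∀ a b : A, D (br a b) = br (D a) b + br a (D b) := by
    intro a b
    rw [hD, hbr, hbr]
    abel
  have key : ∀ x y z : A, br (br x y) z =
      mul (mul (D (D x)) y) z - mul (mul x (D (D y))) z
        - mul (mul (D x) y) (D z) + mul (mul x (D y)) (D z) := by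
    intro x y z
    rw [hbr (br x y) z, hD, hbr x y]
    simp only [map_sub, LinearMap.sub_apply]
    abel
  refine ⟨?_, ?_, ?_, ?_, ?_, ?_, hDbr, ?_, ?_⟩
  · intro a b c
    simp only [hbr, map_add, LinearMap.add_apply]
    abel
  · intro t a b
    simp only [hbr, map_smul, LinearMap.smul_apply, smul_sub]
  · intro a b c
    simp only [hbr, map_add]
    abel
  · intro t a b
    simp only [hbr, map_smul, LinearMap.map_smul, smul_sub]
  · intro a b
    rw [hbr a b, hbr b a, hcomm a (D b), hcomm b (D a)]
    abel
  · intro a b c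
    rw [key a b c, key b c a, key c a b]
    rw [← rot a (D (D b)) c, ← rot a b (D (D c)), rot (D (D c)) a b,
        rot c (D (D a)) b,
        ← rot (D a) (D b) c, rot c (D a) (D b),
        ← rot (D a) b (D c), rot (D c) a (D b)]
    abel
  · intro a b c
    rw [hbr (mul a b) c, hDmul, hbr b c, hbr a c]
    simp only [map_add, map_sub, LinearMap.add_apply, LinearMap.sub_apply]
    rw [sw (D a) b c, hassoc a (D b) c, hassoc a b (D c),
        sw a (D c) b, hassoc a b (D c)]
    abel
  · intro a b c
    rw [hbr b c, hbr (mul a b) c, hbr b (mul a c), hDmul a b, hDmul a c]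
    simp only [map_add, map_sub, LinearMap.add_apply, LinearMap.sub_apply, smul_sub]
    rw [← hassoc a (D b) c, ← hassoc a b (D c),
        hcomm (D b) (mul a c), sw a c (D b),
        hcomm b (mul (D a) c), sw (D a) c b,
        hcomm b (mul a (D c)), sw a (D c) b,
        two_smul, two_smul]
    abel
end

section
/- Let F be a field of characteristic 0, let A be a Zinbiel algebra over F (a vector space with bilinear multiplication (a,b) ↦ ab satisfying (ab + ba)c = a(bc) for all a,b,c), and let D : A → A be an F-linear derivation (D(ab) = D(a)b + aD(b)). Define a ⋆ b = D(a)b − aD(b). Then (A,⋆) is a left-symmetric algebra, i.e., (a⋆b)⋆c − a⋆(b⋆c) = (b⋆a)⋆c − b⋆(a⋆c) holds for all a,b,c ∈ A. -/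
theorem stmt_3 (F : Type*) [Field F] [CharZero F]
    (A : Type*) [AddCommGroup A] [Module F A]
    (mul : A →ₗ[F] A →ₗ[F] A)
    (hzin : ∀ a b c : A, mul (mul a b + mul b a) c = mul a (mul b c))
    (D : A →ₗ[F] A)
    (hDmul : ∀ a b : A, D (mul a b) = mul (D a) b + mul a (D b))
    (star : A → A → A)
    (hstar : ∀ a b : A, star a b = mul (D a) b - mul a (D b)) :
    ∀ a b c : A, star (star a b) c - star a (star b c)
      = star (star b a) c - star b (star a c) := by
  intro a b c
  simp only [hstar, map_sub, map_add, LinearMap.sub_apply, LinearMap.add_apply, hDmul,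
    ← hzin, map_sub, LinearMap.sub_apply, map_add, LinearMap.add_apply]
  abel
end

section
/- Let F be a field of characteristic 0 and let A be an F-vector space with a bilinear multiplication ⋆ and an F-linear map D : A → A that is a derivation of ⋆ (D(a⋆b) = D(a)⋆b + a⋆D(b)). Suppose that for all a,b,c ∈ A the identity 3((a⋆b)⋆c − a⋆(b⋆c)) = (a⋆c)⋆b + (b⋆c)⋆a − (b⋆a)⋆c − (c⋆a)⋆b + 4(a·b)·D(c) + 2D(a)·(b·c) holds, where a·b = (1/2)(a⋆b + b⋆a). Then, setting [a,b] = (1/2)(a⋆b − b⋆a), the polarization (A,·,[,],D) is a generalized Poisson algebra: · is commutative and associative, [,] is antisymmetric and satisfies the Jacobi identity, D is a derivation of both · and [,], and [a·b,c] = a·[b,c] + [a,c]·b + a·b·D(c) holds for all a,b,c ∈ A. -/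
theorem stmt_5 (F : Type*) [Field F] [CharZero F]
    (A : Type*) [AddCommGroup A] [Module F A]
    (star : A →ₗ[F] A →ₗ[F] A) (D : A →ₗ[F] A)
    (hDstar : ∀ a b : A, D (star a b) = star (D a) b + star a (D b))
    (cdot lb : A → A → A)
    (hcdot : ∀ a b : A, cdot a b = (2 : F)⁻¹ • (star a b + star b a))
    (hlb : ∀ a b : A, lb a b = (2 : F)⁻¹ • (star a b - star b a))
    (hmain : ∀ a b c : A, (3 : F) • (star (star a b) c - star a (star b c)) =
      star (star a c) b + star (star b c) a - star (star b a) c - star (star c a) b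
      + (4 : F) • cdot (cdot a b) (D c) + (2 : F) • cdot (D a) (cdot b c)) :
    (∀ a b : A, cdot a b = cdot b a) ∧
    (∀ a b c : A, cdot (cdot a b) c = cdot a (cdot b c)) ∧
    (∀ a b : A, lb a b = - lb b a) ∧
    (∀ a b c : A, lb (lb a b) c + lb (lb b c) a + lb (lb c a) b = 0) ∧
    (∀ a b : A, D (cdot a b) = cdot (D a) b + cdot a (D b)) ∧
    (∀ a b : A, D (lb a b) = lb (D a) b + lb a (D b)) ∧
    (∀ a b c : A, lb (cdot a b) c =
      cdot a (lb b c) + cdot (lb a c) b + cdot (cdot a b) (D c)) := by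
  refine ⟨?_, ?_, ?_, ?_, ?_, ?_, ?_⟩
  · intro a b
    simp only [hcdot]
    module
  · intro a b c
    have h1 := hmain a b c
    have h2 := hmain a c b
    have h5 := hmain c a b
    have h6 := hmain c b a
    simp only [hcdot, map_add, map_smul, LinearMap.add_apply, LinearMap.smul_apply]
      at h1 h2 h5 h6 ⊢
    linear_combination (norm := module)
      (12:F)⁻¹ • h1 + (12:F)⁻¹ • h2 - (12:F)⁻¹ • h5 - (12:F)⁻¹ • h6
  · intro a b
    simp only [hlb]
    module
  · intro a b c
    have h1 := hmain a b c
    have h2 := hmain a c b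
    have h3 := hmain b a c
    have h4 := hmain b c a
    have h5 := hmain c a b
    have h6 := hmain c b a
    simp only [hcdot, hlb, map_add, map_sub, map_smul, LinearMap.add_apply,
      LinearMap.sub_apply, LinearMap.smul_apply] at h1 h2 h3 h4 h5 h6 ⊢
    linear_combination (norm := module)
      (12:F)⁻¹ • h1 - (12:F)⁻¹ • h2 - (12:F)⁻¹ • h3 + (12:F)⁻¹ • h4
        + (12:F)⁻¹ • h5 - (12:F)⁻¹ • h6
  · intro a b
    simp only [hcdot, map_add, map_smul, hDstar]
    module
  · intro a b
    simp only [hlb, map_sub, map_smul, hDstar]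
    module
  · intro a b c
    have h1 := hmain a b c
    have h2 := hmain a c b
    have h3 := hmain b a c
    have h4 := hmain b c a
    have h5 := hmain c a b
    have h6 := hmain c b a
    simp only [hcdot, hlb, map_add, map_sub, map_smul, LinearMap.add_apply,
      LinearMap.sub_apply, LinearMap.smul_apply] at h1 h2 h3 h4 h5 h6 ⊢
    linear_combination (norm := module)
      (12:F)⁻¹ • h1 - (12:F)⁻¹ • h2 + (12:F)⁻¹ • h3 - (12:F)⁻¹ • h4
        + (12:F)⁻¹ • h5 + (12:F)⁻¹ • h6
end

section
/- Let F be a field of characteristic 0 and let (A,·,[,],D) be a generalized Poisson algebra over F: · is commutative and associative, [,] is a Lie bracket, D is an F-linear derivation of both products, and [a·b,c] = a·[b,c] + [a,c]·b + a·b·D(c) for all a,b,c. Define a ⋆ b = a·b + [a,b]. Then for all a,b,c ∈ A the identity 3((a⋆b)⋆c − a⋆(b⋆c)) = (a⋆c)⋆b + (b⋆c)⋆a − (b⋆a)⋆c − (c⋆a)⋆b + 4(a·b)·D(c) + 2D(a)·(b·c) holds. -/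
theorem stmt_6 (F : Type*) [Field F] [CharZero F]
    (A : Type*) [AddCommGroup A] [Module F A]
    (mul br : A →ₗ[F] A →ₗ[F] A) (D : A →ₗ[F] A)
    (hcomm : ∀ a b : A, mul a b = mul b a)
    (hassoc : ∀ a b c : A, mul (mul a b) c = mul a (mul b c))
    (hanti : ∀ a b : A, br a b = - br b a)
    (hjac : ∀ a b c : A, br (br a b) c + br (br b c) a + br (br c a) b = 0)
    (hDmul : ∀ a b : A, D (mul a b) = mul (D a) b + mul a (D b))
    (hDbr : ∀ a b : A, D (br a b) = br (D a) b + br a (D b))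
    (hGP : ∀ a b c : A, br (mul a b) c =
      mul a (br b c) + mul (br a c) b + mul (mul a b) (D c))
    (star : A → A → A)
    (hstar : ∀ a b : A, star a b = mul a b + br a b) :
    ∀ a b c : A, (3 : F) • (star (star a b) c - star a (star b c)) =
      star (star a c) b + star (star b c) a - star (star b a) c - star (star c a) b
      + (4 : F) • mul (mul a b) (D c) + (2 : F) • mul (D a) (mul b c) := by
  intro a b c
  have hGP' : ∀ x y z : A, br x (mul y z) =
      - mul y (br z x) - mul (br y x) z - mul (mul y z) (D x) := by
    intro x y z
    rw [hanti, hGP]; abel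
  have hba : br b a = - br a b := hanti b a
  have hca : br c a = - br a c := hanti c a
  have hcb : br c b = - br b c := hanti c b
  have hd1 : br a (br b c) = - br (br b c) a := hanti a (br b c)
  have hd2 : br (br a c) b = br (br a b) c + br (br b c) a := by
    have h := hjac a b c
    rw [hca, map_neg, LinearMap.neg_apply, add_neg_eq_zero] at h
    exact h.symm
  have hm1 : mul a (br b c) = mul (br b c) a := hcomm _ _
  have hm2 : mul b (br a c) = mul (br a c) b := hcomm _ _
  have hm3 : mul c (br a b) = mul (br a b) c := hcomm _ _
  have m1 : mul (mul a b) c = mul a (mul b c) := hassoc a b c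
  have m2 : mul (mul a c) b = mul a (mul b c) := by
    rw [hassoc, hcomm c b]
  have m3 : mul (mul b c) a = mul a (mul b c) := hcomm _ _
  have m4 : mul (mul b a) c = mul a (mul b c) := by
    rw [hcomm b a, hassoc]
  have m5 : mul (mul c a) b = mul a (mul b c) := by
    rw [hcomm c a, hassoc, hcomm c b]
  have hd3 : mul (mul b a) (D c) = mul (mul a b) (D c) := by rw [hcomm b a]
  have hd4 : mul (mul c a) (D b) = mul (mul a c) (D b) := by rw [hcomm c a]
  have hd5 : mul (mul c b) (D a) = mul (mul b c) (D a) := by rw [hcomm c b]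
  have hd6 : mul (D a) (mul b c) = mul (mul b c) (D a) := hcomm _ _
  simp only [hstar, map_add, LinearMap.add_apply]
  simp only [hGP, hGP', hba, hca, hcb, map_neg, LinearMap.neg_apply, neg_neg,
    hd1, hd2, hm1, hm2, hm3, m1, m2, m3, m4, m5, hd3, hd4, hd5, hd6]
  module
end

section
/- Let F be a field of characteristic 0 and let A be an F-vector space with a bilinear multiplication ⋆ and an F-linear map D : A → A. Suppose that for all a,b,c ∈ A the identities a⋆(b⋆c) − (c⋆b)⋆a − 2(b·c)·D(a) + 4(a·b)·D(c) = 0 and (a⋆b)⋆c − a⋆(b⋆c) − (1/2)(a⋆c)⋆b + (1/2)(c⋆a)⋆b − 2(a·b)·D(c) = 0 hold, where a·b = (1/2)(a⋆b + b⋆a). Then the commutative product · is associative: (a·b)·c = a·(b·c) for all a,b,c ∈ A. -/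
theorem stmt_7 (F : Type*) [Field F] [CharZero F]
    (A : Type*) [AddCommGroup A] [Module F A]
    (star : A →ₗ[F] A →ₗ[F] A) (D : A →ₗ[F] A)
    (cdot : A → A → A)
    (hcdot : ∀ a b : A, cdot a b = (2 : F)⁻¹ • (star a b + star b a))
    (hid1 : ∀ a b c : A, star a (star b c) - star (star c b) a
      - (2 : F) • cdot (cdot b c) (D a) + (4 : F) • cdot (cdot a b) (D c) = 0)
    (hid2 : ∀ a b c : A, star (star a b) c - star a (star b c)
      - (2 : F)⁻¹ • star (star a c) b + (2 : F)⁻¹ • star (star c a) b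
      - (2 : F) • cdot (cdot a b) (D c) = 0)
    :
    ∀ a b c : A, cdot (cdot a b) c = cdot a (cdot b c) := by
  intro a b c
  have h1abc := hid1 a b c
  have h1acb := hid1 a c b
  have h1bac := hid1 b a c
  have h1cab := hid1 c a b
  have h1cba := hid1 c b a
  have h2abc := hid2 a b c
  have h2acb := hid2 a c b
  have h2bac := hid2 b a c
  simp only [hcdot, map_add, map_smul, LinearMap.add_apply,
    LinearMap.smul_apply] at h1abc h1acb h1bac h1cab h1cba h2abc h2acb h2bac ⊢
  linear_combination (norm := module) ((5/12 : F)) • h1abc + ((2/3 : F)) • h2abc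
    + ((1/12 : F)) • h1acb + ((1/3 : F)) • h2acb + ((1/3 : F)) • h1bac
    + ((1/3 : F)) • h2bac + ((1/4 : F)) • h1cab + ((1/4 : F)) • h1cba
end

section
/- Let F be a field of characteristic 0 and let A be an F-vector space with a bilinear multiplication ⋆ and an F-linear map D : A → A. Suppose that for all a,b,c ∈ A the identities a⋆(b⋆c) − (c⋆b)⋆a − 2(b·c)·D(a) + 4(a·b)·D(c) = 0 and (a⋆b)⋆c − a⋆(b⋆c) − (1/2)(a⋆c)⋆b + (1/2)(c⋆a)⋆b − 2(a·b)·D(c) = 0 hold, where a·b = (1/2)(a⋆b + b⋆a). Then the bracket [a,b] = (1/2)(a⋆b − b⋆a) satisfies the Jacobi identity [[a,b],c] + [[b,c],a] + [[c,a],b] = 0 for all a,b,c ∈ A. -/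
theorem stmt_8 (F : Type*) [Field F] [CharZero F]
    (A : Type*) [AddCommGroup A] [Module F A]
    (star : A →ₗ[F] A →ₗ[F] A) (D : A →ₗ[F] A)
    (cdot lb : A → A → A)
    (hcdot : ∀ a b : A, cdot a b = (2 : F)⁻¹ • (star a b + star b a))
    (hlb : ∀ a b : A, lb a b = (2 : F)⁻¹ • (star a b - star b a))
    (hid1 : ∀ a b c : A, star a (star b c) - star (star c b) a
      - (2 : F) • cdot (cdot b c) (D a) + (4 : F) • cdot (cdot a b) (D c) = 0)
    (hid2 : ∀ a b c : A, star (star a b) c - star a (star b c)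
      - (2 : F)⁻¹ • star (star a c) b + (2 : F)⁻¹ • star (star c a) b
      - (2 : F) • cdot (cdot a b) (D c) = 0)
    :
    ∀ a b c : A, lb (lb a b) c + lb (lb b c) a + lb (lb c a) b = 0 := by
  intro a b c
  simp only [hcdot] at hid1 hid2
  simp only [hcdot, hlb, map_add, map_smul, map_sub, LinearMap.add_apply,
    LinearMap.smul_apply, LinearMap.sub_apply, smul_add, smul_sub, smul_smul] at hid1 hid2 ⊢
  have h1 := hid1
  have h2 := hid2
  linear_combination (norm := module) ((12:F)⁻¹) • h1 a b c + (3:F)⁻¹ • h2 a b c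
    - (12:F)⁻¹ • h1 a c b - (3:F)⁻¹ • h2 a c b - (12:F)⁻¹ • h1 b a c - (3:F)⁻¹ • h2 b a c
    - (4:F)⁻¹ • h1 b c a - (4:F)⁻¹ • h1 c a b + (4:F)⁻¹ • h1 c b a
end

section
/- Let F be a field of characteristic 0 and let A be an F-vector space with a bilinear multiplication ⋆ and an F-linear map D : A → A that is a derivation of ⋆ (D(a⋆b) = D(a)⋆b + a⋆D(b)). Suppose that for all a,b,c ∈ A the identities a⋆(b⋆c) − (c⋆b)⋆a − 2(b·c)·D(a) + 4(a·b)·D(c) = 0 and (a⋆b)⋆c − a⋆(b⋆c) − (1/2)(a⋆c)⋆b + (1/2)(c⋆a)⋆b − 2(a·b)·D(c) = 0 hold, where a·b = (1/2)(a⋆b + b⋆a). Then, setting [a,b] = (1/2)(a⋆b − b⋆a), the polarization (A,·,[,],D) is both a generalized Poisson algebra and a transposed Poisson algebra: · is commutative and associative, [,] is antisymmetric satisfying the Jacobi identity, D is a derivation of both · and [,], and both [a·b,c] = a·[b,c] + [a,c]·b + a·b·D(c) and 2 a·[b,c] = [a·b,c] + [b,a·c] hold for all a,b,c ∈ A. 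-/
set_option maxHeartbeats 2000000

theorem stmt_9 (F : Type*) [Field F] [CharZero F]
    (A : Type*) [AddCommGroup A] [Module F A]
    (star : A →ₗ[F] A →ₗ[F] A) (D : A →ₗ[F] A)
    (hDstar : ∀ a b : A, D (star a b) = star (D a) b + star a (D b))
    (cdot lb : A → A → A)
    (hcdot : ∀ a b : A, cdot a b = (2 : F)⁻¹ • (star a b + star b a))
    (hlb : ∀ a b : A, lb a b = (2 : F)⁻¹ • (star a b - star b a))
    (hid1 : ∀ a b c : A, star a (star b c) - star (star c b) a
      - (2 : F) • cdot (cdot b c) (D a) + (4 : F) • cdot (cdot a b) (D c) = 0)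
    (hid2 : ∀ a b c : A, star (star a b) c - star a (star b c)
      - (2 : F)⁻¹ • star (star a c) b + (2 : F)⁻¹ • star (star c a) b
      - (2 : F) • cdot (cdot a b) (D c) = 0)
    :
    (∀ a b : A, cdot a b = cdot b a) ∧
    (∀ a b c : A, cdot (cdot a b) c = cdot a (cdot b c)) ∧
    (∀ a b : A, lb a b = - lb b a) ∧
    (∀ a b c : A, lb (lb a b) c + lb (lb b c) a + lb (lb c a) b = 0) ∧
    (∀ a b : A, D (cdot a b) = cdot (D a) b + cdot a (D b)) ∧
    (∀ a b : A, D (lb a b) = lb (D a) b + lb a (D b)) ∧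
    (∀ a b c : A, lb (cdot a b) c =
      cdot a (lb b c) + cdot (lb a c) b + cdot (cdot a b) (D c)) ∧
    (∀ a b c : A, (2 : F) • cdot a (lb b c) = lb (cdot a b) c + lb b (cdot a c)) := by
  simp only [hcdot, hlb] at hid1 hid2 ⊢
  simp only [map_add, map_smul, map_sub, LinearMap.add_apply, LinearMap.smul_apply,
    LinearMap.sub_apply, smul_add, smul_sub] at hid1 hid2 ⊢
  refine ⟨?_, ?_, ?_, ?_, ?_, ?_, ?_, ?_⟩
  · intro a b; module
  · intro a b c
    linear_combination (norm := module) ((5/12 : F)) • hid1 a b c + ((2/3 : F)) • hid2 a b c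
      + ((1/12 : F)) • hid1 a c b + ((1/3 : F)) • hid2 a c b
      + ((1/3 : F)) • hid1 b a c + ((1/3 : F)) • hid2 b a c
      + ((1/4 : F)) • hid1 c a b + ((1/4 : F)) • hid1 c b a
  · intro a b; module
  · intro a b c
    linear_combination (norm := module) ((1/12 : F)) • hid1 a b c + ((1/3 : F)) • hid2 a b c
      + ((-1/12 : F)) • hid1 a c b + ((-1/3 : F)) • hid2 a c b
      + ((-1/12 : F)) • hid1 b a c + ((-1/3 : F)) • hid2 b a c
      + ((-1/4 : F)) • hid1 b c a + ((-1/4 : F)) • hid1 c a b + ((1/4 : F)) • hid1 c b a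
  · intro a b
    simp only [hDstar, map_add, map_smul]
    module
  · intro a b
    simp only [hDstar, map_sub, map_smul]
    module
  · intro a b c
    linear_combination (norm := module) ((-1/4 : F)) • hid1 a b c + ((1/4 : F)) • hid1 a c b
      + ((-1/4 : F)) • hid1 b a c + ((1/4 : F)) • hid1 b c a
      + ((-1/4 : F)) • hid1 c a b + ((-1/4 : F)) • hid1 c b a
  · intro a b c
    linear_combination (norm := module) ((1/2 : F)) • hid1 a b c + ((-1/2 : F)) • hid1 a c b
      + ((-1/4 : F)) • hid1 b a c + ((-1/4 : F)) • hid1 b c a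
      + ((1/4 : F)) • hid1 c a b + ((1/4 : F)) • hid1 c b a
end

section
/- Let F be a field of characteristic 0 and let (A,·,[,],D) be both a generalized Poisson algebra and a transposed Poisson algebra over F: · is commutative and associative, [,] is a Lie bracket, D is an F-linear derivation of both products, and both [a·b,c] = a·[b,c] + [a,c]·b + a·b·D(c) and 2 a·[b,c] = [a·b,c] + [b,a·c] hold for all a,b,c. Define a ⋆ b = a·b + [a,b]. Then for all a,b,c ∈ A the identities a⋆(b⋆c) − (c⋆b)⋆a − 2(b·c)·D(a) + 4(a·b)·D(c) = 0 and (a⋆b)⋆c − a⋆(b⋆c) − (1/2)(a⋆c)⋆b + (1/2)(c⋆a)⋆b − 2(a·b)·D(c) = 0 hold. -/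
theorem stmt_10 (F : Type*) [Field F] [CharZero F]
    (A : Type*) [AddCommGroup A] [Module F A]
    (mul br : A →ₗ[F] A →ₗ[F] A) (D : A →ₗ[F] A)
    (hcomm : ∀ a b : A, mul a b = mul b a)
    (hassoc : ∀ a b c : A, mul (mul a b) c = mul a (mul b c))
    (hanti : ∀ a b : A, br a b = - br b a)
    (hjac : ∀ a b c : A, br (br a b) c + br (br b c) a + br (br c a) b = 0)
    (hDmul : ∀ a b : A, D (mul a b) = mul (D a) b + mul a (D b))
    (hDbr : ∀ a b : A, D (br a b) = br (D a) b + br a (D b))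
    (hGP : ∀ a b c : A, br (mul a b) c =
      mul a (br b c) + mul (br a c) b + mul (mul a b) (D c))
    (hTP : ∀ a b c : A, (2 : F) • mul a (br b c) = br (mul a b) c + br b (mul a c))
    (star : A → A → A)
    (hstar : ∀ a b : A, star a b = mul a b + br a b) :
    (∀ a b c : A, star a (star b c) - star (star c b) a
      - (2 : F) • mul (mul b c) (D a) + (4 : F) • mul (mul a b) (D c) = 0) ∧
    (∀ a b c : A, star (star a b) c - star a (star b c)
      - (2 : F)⁻¹ • star (star a c) b + (2 : F)⁻¹ • star (star c a) b
      - (2 : F) • mul (mul a b) (D c) = 0) := by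
  -- cancel a factor 2
  have cancel2 : ∀ x : A, (2 : F) • x = 0 → x = 0 := by
    intro x hx
    have h := congrArg (fun y : A => (2 : F)⁻¹ • y) hx
    simpa [smul_smul, inv_mul_cancel₀ (two_ne_zero (α := F))] using h
  -- T : a[b,c] + b[c,a] + c[a,b] = 0 (from TP alone)
  have hT : ∀ a b c : A, mul a (br b c) + mul b (br c a) + mul c (br a b) = 0 := by
    intro a b c
    apply cancel2
    have h1 := hTP a b c
    have h2 := hTP b c a
    have h3 := hTP c a b
    have e1 : br (mul a b) c = - br c (mul b a) := by
      rw [hcomm a b]; exact hanti _ _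
    have e2 : br b (mul a c) = - br (mul c a) b := by
      rw [hcomm a c]; exact hanti _ _
    have e3 : br (mul b c) a = - br a (mul c b) := by
      rw [hcomm b c]; exact hanti _ _
    rw [e1, e2] at h1
    rw [e3] at h2
    linear_combination (norm := module) h1 + h2 + h3
  -- key : b[c,a] + c[a,b] = (ab)D(c) - (ac)D(b)
  have key : ∀ a b c : A, mul b (br c a) + mul c (br a b)
      = mul (mul a b) (D c) - mul (mul a c) (D b) := by
    intro a b c
    have h := hTP a b c
    have e2 : br b (mul a c) = mul a (br b c) - mul (br a b) c - mul (mul a c) (D b) := by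
      rw [hanti b (mul a c), hGP a c b, hanti c b, map_neg]
      abel
    rw [hGP a b c, e2] at h
    have e3 : mul (br a c) b = - mul b (br c a) := by
      rw [hanti a c, map_neg, LinearMap.neg_apply, hcomm]
    have e4 : mul (br a b) c = mul c (br a b) := hcomm _ _
    rw [e3, e4] at h
    linear_combination (norm := module) h
  -- hC : a[b,c] = (ac)D(b) - (ab)D(c)
  have hC : ∀ a b c : A, mul a (br b c)
      = mul (mul a c) (D b) - mul (mul a b) (D c) := by
    intro a b c
    linear_combination (norm := module) hT a b c - key a b c
  constructor
  · intro a b c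
    simp only [hstar, map_add, LinearMap.add_apply]
    -- normalize swapped atoms
    have p1 : mul (mul c b) a = mul a (mul b c) := by
      rw [hcomm (mul c b) a, hcomm c b]
    have p2 : mul (br c b) a = - mul a (br b c) := by
      rw [hcomm (br c b) a, hanti c b, map_neg]
    have p3 : br (br c b) a = br a (br b c) := by
      rw [hanti c b, map_neg, LinearMap.neg_apply, hanti (br b c) a, neg_neg]
    have p4 : br a (mul b c) = - br (mul b c) a := hanti _ _
    have p5 : br (mul c b) a = br (mul b c) a := by rw [hcomm c b]
    rw [p1, p2, p3, p4, p5, hGP b c a]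
    have e5 : mul (br b a) c = - mul c (br a b) := by
      rw [hanti b a, map_neg, LinearMap.neg_apply, hcomm]
    rw [e5, hC a b c, hC b c a, hC c a b]
    have q1 : mul (mul b a) (D c) = mul (mul a b) (D c) := by rw [hcomm b a]
    have q2 : mul (mul c b) (D a) = mul (mul b c) (D a) := by rw [hcomm c b]
    have q3 : mul (mul c a) (D b) = mul (mul a c) (D b) := by rw [hcomm c a]
    rw [q1, q2, q3]
    module
  · intro a b c
    simp only [hstar, map_add, LinearMap.add_apply]
    have r1 : mul (mul c a) b = mul (mul a c) b := by rw [hcomm c a]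
    have r2 : mul (br c a) b = - mul (br a c) b := by
      rw [hanti c a, map_neg, LinearMap.neg_apply]
    have r3 : br (mul c a) b = br (mul a c) b := by rw [hcomm c a]
    have r4 : br (br a c) b = - br (br c a) b := by
      rw [hanti a c, map_neg, LinearMap.neg_apply]
    have r5 : br a (br b c) = - br (br b c) a := hanti _ _
    have p4 : br a (mul b c) = - br (mul b c) a := hanti _ _
    rw [r1, r2, r3, r4, r5, p4, hGP a b c, hGP b c a, hGP a c b]
    -- normalize product-bracket mixed terms
    have s1 : mul (br a b) c = mul c (br a b) := hcomm _ _
    have s2 : mul (br a c) b = mul b (br a c) := hcomm _ _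
    have e5 : mul (br b a) c = - mul c (br a b) := by
      rw [hanti b a, map_neg, LinearMap.neg_apply, hcomm]
    have e6 : mul a (br c b) = - mul a (br b c) := by
      rw [hanti c b, map_neg]
    rw [s2, e5, e6, s1, hC a b c, hC b a c, hC b c a, hC c a b]
    have q1 : mul (mul b a) (D c) = mul (mul a b) (D c) := by rw [hcomm b a]
    have q2 : mul (mul c b) (D a) = mul (mul b c) (D a) := by rw [hcomm c b]
    have q3 : mul (mul c a) (D b) = mul (mul a c) (D b) := by rw [hcomm c a]
    have q4 : mul (mul a b) c = mul a (mul b c) := hassoc a b c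
    rw [q1, q2, q3, q4]
    linear_combination (norm := module) hjac a b c
end

section
/- Let F be a field of characteristic 0 and let A be an F-vector space with a bilinear multiplication ⋆. Then the following are equivalent: (1) for all a,b,c ∈ A, a⋆(b⋆c) = (c⋆b)⋆a and (a⋆b)⋆c − a⋆(b⋆c) = (1/2)(a⋆c)⋆b − (1/2)(c⋆a)⋆b; (2) setting a·b = (1/2)(a⋆b + b⋆a) and [a,b] = (1/2)(a⋆b − b⋆a), the product · is commutative and associative, the bracket [,] is antisymmetric and satisfies the Jacobi identity, and a·[b,c] = 0 and [a·b,c] = 0 hold for all a,b,c ∈ A. -/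
theorem stmt_11 (F : Type*) [Field F] [CharZero F]
    (A : Type*) [AddCommGroup A] [Module F A]
    (star : A →ₗ[F] A →ₗ[F] A)
    (cdot lb : A → A → A)
    (hcdot : ∀ a b : A, cdot a b = (2 : F)⁻¹ • (star a b + star b a))
    (hlb : ∀ a b : A, lb a b = (2 : F)⁻¹ • (star a b - star b a)) :
    ((∀ a b c : A, star a (star b c) = star (star c b) a) ∧
     (∀ a b c : A, star (star a b) c - star a (star b c)
        = (2 : F)⁻¹ • star (star a c) b - (2 : F)⁻¹ • star (star c a) b))
    ↔
    ((∀ a b : A, cdot a b = cdot b a) ∧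
     (∀ a b c : A, cdot (cdot a b) c = cdot a (cdot b c)) ∧
     (∀ a b : A, lb a b = - lb b a) ∧
     (∀ a b c : A, lb (lb a b) c + lb (lb b c) a + lb (lb c a) b = 0) ∧
     (∀ a b c : A, cdot a (lb b c) = 0) ∧
     (∀ a b c : A, lb (cdot a b) c = 0)) := by
  have h2ne : (2 : F) ≠ 0 := two_ne_zero
  constructor
  · rintro ⟨h1, h2⟩
    refine ⟨?_, ?_, ?_, ?_, ?_, ?_⟩
    · intro a b
      rw [hcdot, hcdot, add_comm]
    · intro a b c
      simp only [hcdot, map_add, map_sub, map_smul, LinearMap.add_apply,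
        LinearMap.sub_apply, LinearMap.smul_apply, smul_add, smul_sub]
      linear_combination (norm := module)
        ((5:F)/12) • h1 a b c + ((2:F)/3) • h2 a b c
        + ((1:F)/12) • h1 a c b + ((1:F)/3) • h2 a c b
        + ((1:F)/3) • h1 b a c + ((1:F)/3) • h2 b a c
        + ((1:F)/4) • h1 c a b + ((1:F)/4) • h1 c b a
    · intro a b
      rw [hlb, hlb]
      module
    · intro a b c
      simp only [hlb, map_add, map_sub, map_smul, LinearMap.add_apply,
        LinearMap.sub_apply, LinearMap.smul_apply, smul_add, smul_sub]
      linear_combination (norm := module)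
        ((1:F)/12) • h1 a b c + ((1:F)/3) • h2 a b c
        - ((1:F)/12) • h1 a c b - ((1:F)/3) • h2 a c b
        - ((1:F)/12) • h1 b a c - ((1:F)/3) • h2 b a c
        - ((1:F)/4) • h1 b c a - ((1:F)/4) • h1 c a b + ((1:F)/4) • h1 c b a
    · intro a b c
      simp only [hcdot, hlb, map_add, map_sub, map_smul, LinearMap.add_apply,
        LinearMap.sub_apply, LinearMap.smul_apply, smul_add, smul_sub]
      linear_combination (norm := module)
        ((1:F)/4) • h1 a b c - ((1:F)/4) • h1 a c b
    · intro a b c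
      simp only [hcdot, hlb, map_add, map_sub, map_smul, LinearMap.add_apply,
        LinearMap.sub_apply, LinearMap.smul_apply, smul_add, smul_sub]
      linear_combination (norm := module)
        - ((1:F)/4) • h1 c a b - ((1:F)/4) • h1 c b a
  · rintro ⟨hc, hA, hanti, hJ, hdl, hld⟩
    simp only [hcdot, hlb, map_add, map_sub, map_smul, LinearMap.add_apply,
      LinearMap.sub_apply, LinearMap.smul_apply, smul_add, smul_sub] at hA hJ hdl hld
    constructor
    · intro a b c
      linear_combination (norm := module)
        (2:F) • hdl a b c - (2:F) • hld b c a
    · intro a b c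
      linear_combination (norm := module)
        hA a b c - hdl a b c + hld a b c - hdl b a c + hld b c a + hdl c a b + hJ a b c
end

section
/- Let F be a field of characteristic 0 and let P be a generalized Poisson algebra over F: a commutative associative product ·, a Lie bracket [,], and an F-linear derivation D of both products satisfying [a·b,c] = a·[b,c] + [a,c]·b + a·b·D(c) for all a,b,c ∈ P. Let A and B be abelian subalgebras of P (x·y = 0 and [x,y] = 0 for all x,y in A, and likewise in B), and suppose P = A + B. Then c₁·[c₂,c₃]·c₄ = 0 for all c₁,c₂,c₃,c₄ ∈ P. -/
theorem stmt_13 (F : Type*) [Field F] [CharZero F]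
    (P : Type*) [AddCommGroup P] [Module F P]
    (mul br : P →ₗ[F] P →ₗ[F] P) (D : P →ₗ[F] P)
    (hcomm : ∀ a b : P, mul a b = mul b a)
    (hassoc : ∀ a b c : P, mul (mul a b) c = mul a (mul b c))
    (hanti : ∀ a b : P, br a b = - br b a)
    (hjac : ∀ a b c : P, br (br a b) c + br (br b c) a + br (br c a) b = 0)
    (hDmul : ∀ a b : P, D (mul a b) = mul (D a) b + mul a (D b))
    (hDbr : ∀ a b : P, D (br a b) = br (D a) b + br a (D b))
    (hGP : ∀ a b c : P, br (mul a b) c =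
      mul a (br b c) + mul (br a c) b + mul (mul a b) (D c))
    (A B : Submodule F P)
    (hA : ∀ x ∈ A, ∀ y ∈ A, mul x y = 0 ∧ br x y = 0)
    (hB : ∀ x ∈ B, ∀ y ∈ B, mul x y = 0 ∧ br x y = 0)
    (hsum : ∀ p : P, ∃ a ∈ A, ∃ b ∈ B, p = a + b)
    :
    ∀ c₁ c₂ c₃ c₄ : P, mul (mul c₁ (br c₂ c₃)) c₄ = 0 := by
  -- First, a rearrangement lemma: (p·q)·r = (p·r)·q
  have swap23 : ∀ p q r : P, mul (mul p q) r = mul (mul p r) q := by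
    intro p q r
    rw [hassoc, hcomm q r, ← hassoc]
  -- Any triple product whose first factor lies in A vanishes
  have hAz : ∀ a ∈ A, ∀ y z : P, mul (mul a y) z = 0 := by
    intro a ha y z
    obtain ⟨ay, hay, cy, hcy, rfl⟩ := hsum y
    obtain ⟨az, haz, cz, hcz, rfl⟩ := hsum z
    have h1 : mul a ay = 0 := (hA a ha ay hay).1
    have h2 : mul a az = 0 := (hA a ha az haz).1
    have h3 : mul cy cz = 0 := (hB cy hcy cz hcz).1
    have e1 : mul a (ay + cy) = mul a cy := by
      rw [map_add, h1, zero_add]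
    rw [e1, map_add]
    have t1 : mul (mul a cy) az = 0 := by
      rw [swap23, h2]
      simp
    have t2 : mul (mul a cy) cz = 0 := by
      rw [hassoc, h3]
      simp
    rw [t1, t2, add_zero]
  -- Any triple product whose first factor lies in B vanishes
  have hBz : ∀ b ∈ B, ∀ y z : P, mul (mul b y) z = 0 := by
    intro b hb y z
    obtain ⟨ay, hay, cy, hcy, rfl⟩ := hsum y
    have h1 : mul b cy = 0 := (hB b hb cy hcy).1
    have e1 : mul b (ay + cy) = mul ay b := by
      rw [map_add, h1, add_zero, hcomm]
    rw [e1]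
    exact hAz ay hay b z
  -- Hence all triple products vanish
  have tri : ∀ x y z : P, mul (mul x y) z = 0 := by
    intro x y z
    obtain ⟨ax, hax, bx, hbx, rfl⟩ := hsum x
    have e1 : mul (ax + bx) y = mul ax y + mul bx y := by
      rw [map_add]; rfl
    rw [e1, map_add, LinearMap.add_apply, hAz ax hax, hBz bx hbx, add_zero]
  intro c₁ c₂ c₃ c₄
  exact tri c₁ (br c₂ c₃) c₄
end

section
/- Let F be a field of characteristic 0 and let P be a generalized Poisson algebra over F: a commutative associative product ·, a Lie bracket [,], and an F-linear derivation D of both products satisfying [a·b,c] = a·[b,c] + [a,c]·b + a·b·D(c) for all a,b,c ∈ P. Let A and B be abelian subalgebras of P (x·y = 0 and [x,y] = 0 for all x,y in A, and likewise in B), and suppose P = A + B. Then for all c₁,c₂,c₃,c₄ ∈ P: c₁·c₂·[c₃,c₄] = 0, [c₁,c₂]·c₃·c₄ = 0, and [c₁·c₂, c₃·c₄] = 0. -/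
theorem stmt_14 (F : Type*) [Field F] [CharZero F]
    (P : Type*) [AddCommGroup P] [Module F P]
    (mul br : P →ₗ[F] P →ₗ[F] P) (D : P →ₗ[F] P)
    (hcomm : ∀ a b : P, mul a b = mul b a)
    (hassoc : ∀ a b c : P, mul (mul a b) c = mul a (mul b c))
    (hanti : ∀ a b : P, br a b = - br b a)
    (hjac : ∀ a b c : P, br (br a b) c + br (br b c) a + br (br c a) b = 0)
    (hDmul : ∀ a b : P, D (mul a b) = mul (D a) b + mul a (D b))
    (hDbr : ∀ a b : P, D (br a b) = br (D a) b + br a (D b))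
    (hGP : ∀ a b c : P, br (mul a b) c =
      mul a (br b c) + mul (br a c) b + mul (mul a b) (D c))
    (A B : Submodule F P)
    (hA : ∀ x ∈ A, ∀ y ∈ A, mul x y = 0 ∧ br x y = 0)
    (hB : ∀ x ∈ B, ∀ y ∈ B, mul x y = 0 ∧ br x y = 0)
    (hsum : ∀ p : P, ∃ a ∈ A, ∃ b ∈ B, p = a + b)
    :
    ∀ c₁ c₂ c₃ c₄ : P,
      mul (mul c₁ c₂) (br c₃ c₄) = 0 ∧
      mul (mul (br c₁ c₂) c₃) c₄ = 0 ∧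
      br (mul c₁ c₂) (mul c₃ c₄) = 0 := by
  have mul0l : ∀ w : P, mul 0 w = 0 := fun w => by
    rw [map_zero]; rfl
  have mul0r : ∀ w : P, mul w 0 = 0 := fun w => (mul w).map_zero
  -- if two of the three factors lie in a common abelian subalgebra, the product is 0
  have pair : ∀ (S : Submodule F P), (∀ x ∈ S, ∀ y ∈ S, mul x y = 0 ∧ br x y = 0) →
      ∀ u v w : P, ((u ∈ S ∧ v ∈ S) ∨ (u ∈ S ∧ w ∈ S) ∨ (v ∈ S ∧ w ∈ S)) →
      mul (mul u v) w = 0 := by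
    intro S hS u v w h
    rcases h with ⟨hu, hv⟩ | ⟨hu, hw⟩ | ⟨hv, hw⟩
    · rw [(hS u hu v hv).1]; exact mul0l w
    · rw [hassoc, hcomm v w, ← hassoc, (hS u hu w hw).1]; exact mul0l v
    · rw [hassoc, (hS v hv w hw).1]; exact mul0r u
  have h8 : ∀ u v w : P, (u ∈ A ∨ u ∈ B) → (v ∈ A ∨ v ∈ B) → (w ∈ A ∨ w ∈ B) →
      mul (mul u v) w = 0 := by
    intro u v w hu hv hw
    rcases hu with hu | hu <;> rcases hv with hv | hv <;> rcases hw with hw | hw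
    · exact pair A hA u v w (Or.inl ⟨hu, hv⟩)
    · exact pair A hA u v w (Or.inl ⟨hu, hv⟩)
    · exact pair A hA u v w (Or.inr (Or.inl ⟨hu, hw⟩))
    · exact pair B hB u v w (Or.inr (Or.inr ⟨hv, hw⟩))
    · exact pair A hA u v w (Or.inr (Or.inr ⟨hv, hw⟩))
    · exact pair B hB u v w (Or.inr (Or.inl ⟨hu, hw⟩))
    · exact pair B hB u v w (Or.inl ⟨hu, hv⟩)
    · exact pair B hB u v w (Or.inl ⟨hu, hv⟩)
  -- every triple product vanishes
  have triple : ∀ x y z : P, mul (mul x y) z = 0 := by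
    intro x y z
    obtain ⟨a₁, ha₁, b₁, hb₁, hx⟩ := hsum x
    obtain ⟨a₂, ha₂, b₂, hb₂, hy⟩ := hsum y
    obtain ⟨a₃, ha₃, b₃, hb₃, hz⟩ := hsum z
    subst hx hy hz
    simp only [map_add, LinearMap.add_apply]
    rw [h8 _ _ _ (Or.inl ha₁) (Or.inl ha₂) (Or.inl ha₃),
        h8 _ _ _ (Or.inl ha₁) (Or.inl ha₂) (Or.inr hb₃),
        h8 _ _ _ (Or.inl ha₁) (Or.inr hb₂) (Or.inl ha₃),
        h8 _ _ _ (Or.inl ha₁) (Or.inr hb₂) (Or.inr hb₃),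
        h8 _ _ _ (Or.inr hb₁) (Or.inl ha₂) (Or.inl ha₃),
        h8 _ _ _ (Or.inr hb₁) (Or.inl ha₂) (Or.inr hb₃),
        h8 _ _ _ (Or.inr hb₁) (Or.inr hb₂) (Or.inl ha₃),
        h8 _ _ _ (Or.inr hb₁) (Or.inr hb₂) (Or.inr hb₃)]
    simp
  have triple' : ∀ x y z : P, mul x (mul y z) = 0 := by
    intro x y z; rw [hcomm]
    exact triple y z x
  have brmul : ∀ x y z w : P, mul x (br (mul y z) w) = 0 := by
    intro x y z w
    rw [hGP]
    simp only [map_add]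
    rw [triple', triple', triple' x (mul y z) (D w)]
    simp
  intro c₁ c₂ c₃ c₄
  refine ⟨triple c₁ c₂ (br c₃ c₄), ?_, ?_⟩
  · rw [hcomm (br c₁ c₂) c₃, hassoc]
    exact triple' c₃ (br c₁ c₂) c₄
  · have t1 : mul c₁ (br c₂ (mul c₃ c₄)) = 0 := by
      rw [hanti, map_neg, brmul, neg_zero]
    have t2 : mul (br c₁ (mul c₃ c₄)) c₂ = 0 := by
      rw [hcomm, hanti, map_neg, brmul, neg_zero]
    rw [hGP, t1, t2, triple]
    simp
end

section
/- Let F be a field of characteristic 0 and let P be a generalized Poisson algebra over F: a commutative associative product ·, a Lie bracket [,], and an F-linear derivation D of both products satisfying [a·b,c] = a·[b,c] + [a,c]·b + a·b·D(c) for all a,b,c ∈ P. Let A and B be abelian subalgebras of P (x·y = 0 and [x,y] = 0 for all x,y in A, and likewise in B), and suppose P = A + B. Then [c₁·c₂·c₃, c₄] = 0 for all c₁,c₂,c₃,c₄ ∈ P. -/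
theorem stmt_15 (F : Type*) [Field F] [CharZero F]
    (P : Type*) [AddCommGroup P] [Module F P]
    (mul br : P →ₗ[F] P →ₗ[F] P) (D : P →ₗ[F] P)
    (hcomm : ∀ a b : P, mul a b = mul b a)
    (hassoc : ∀ a b c : P, mul (mul a b) c = mul a (mul b c))
    (hanti : ∀ a b : P, br a b = - br b a)
    (hjac : ∀ a b c : P, br (br a b) c + br (br b c) a + br (br c a) b = 0)
    (hDmul : ∀ a b : P, D (mul a b) = mul (D a) b + mul a (D b))
    (hDbr : ∀ a b : P, D (br a b) = br (D a) b + br a (D b))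
    (hGP : ∀ a b c : P, br (mul a b) c =
      mul a (br b c) + mul (br a c) b + mul (mul a b) (D c))
    (A B : Submodule F P)
    (hA : ∀ x ∈ A, ∀ y ∈ A, mul x y = 0 ∧ br x y = 0)
    (hB : ∀ x ∈ B, ∀ y ∈ B, mul x y = 0 ∧ br x y = 0)
    (hsum : ∀ p : P, ∃ a ∈ A, ∃ b ∈ B, p = a + b)
    :
    ∀ c₁ c₂ c₃ c₄ : P, br (mul (mul c₁ c₂) c₃) c₄ = 0 := by
  have h8 : ∀ x y z : P, (x ∈ A ∨ x ∈ B) → (y ∈ A ∨ y ∈ B) → (z ∈ A ∨ z ∈ B) →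
      mul (mul x y) z = 0 := by
    intro x y z hx hy hz
    rcases hx with hx | hx <;> rcases hy with hy | hy
    · rw [(hA x hx y hy).1]; simp
    · rcases hz with hz | hz
      · rw [hcomm x y, hassoc, (hA x hx z hz).1]; simp
      · rw [hassoc, (hB y hy z hz).1]; simp
    · rcases hz with hz | hz
      · rw [hassoc, (hA y hy z hz).1]; simp
      · rw [hcomm x y, hassoc, (hB x hx z hz).1]; simp
    · rw [(hB x hx y hy).1]; simp
  have key : ∀ c₁ c₂ c₃ : P, mul (mul c₁ c₂) c₃ = 0 := by
    intro c₁ c₂ c₃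
    obtain ⟨a₁, ha₁, b₁, hb₁, rfl⟩ := hsum c₁
    obtain ⟨a₂, ha₂, b₂, hb₂, rfl⟩ := hsum c₂
    obtain ⟨a₃, ha₃, b₃, hb₃, rfl⟩ := hsum c₃
    simp only [map_add, LinearMap.add_apply]
    rw [h8 a₁ a₂ a₃ (Or.inl ha₁) (Or.inl ha₂) (Or.inl ha₃),
        h8 a₁ a₂ b₃ (Or.inl ha₁) (Or.inl ha₂) (Or.inr hb₃),
        h8 a₁ b₂ a₃ (Or.inl ha₁) (Or.inr hb₂) (Or.inl ha₃),
        h8 a₁ b₂ b₃ (Or.inl ha₁) (Or.inr hb₂) (Or.inr hb₃),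
        h8 b₁ a₂ a₃ (Or.inr hb₁) (Or.inl ha₂) (Or.inl ha₃),
        h8 b₁ a₂ b₃ (Or.inr hb₁) (Or.inl ha₂) (Or.inr hb₃),
        h8 b₁ b₂ a₃ (Or.inr hb₁) (Or.inr hb₂) (Or.inl ha₃),
        h8 b₁ b₂ b₃ (Or.inr hb₁) (Or.inr hb₂) (Or.inr hb₃)]
    simp
  intro c₁ c₂ c₃ c₄
  rw [key]
  simp
end

section
/- Let F be a field of characteristic 0 and let P be a generalized Poisson algebra over F: a commutative associative product ·, a Lie bracket [,], and an F-linear derivation D of both products satisfying [a·b,c] = a·[b,c] + [a,c]·b + a·b·D(c) for all a,b,c ∈ P. Let A and B be abelian subalgebras of P (x·y = 0 and [x,y] = 0 for all x,y in A, and likewise in B), and suppose P = A + B. Then [c₁·c₂, [c₃,c₄]] = 0 for all c₁,c₂,c₃,c₄ ∈ P. -/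
theorem stmt_16 (F : Type*) [Field F] [CharZero F]
    (P : Type*) [AddCommGroup P] [Module F P]
    (mul br : P →ₗ[F] P →ₗ[F] P) (D : P →ₗ[F] P)
    (hcomm : ∀ a b : P, mul a b = mul b a)
    (hassoc : ∀ a b c : P, mul (mul a b) c = mul a (mul b c))
    (hanti : ∀ a b : P, br a b = - br b a)
    (hjac : ∀ a b c : P, br (br a b) c + br (br b c) a + br (br c a) b = 0)
    (hDmul : ∀ a b : P, D (mul a b) = mul (D a) b + mul a (D b))
    (hDbr : ∀ a b : P, D (br a b) = br (D a) b + br a (D b))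
    (hGP : ∀ a b c : P, br (mul a b) c =
      mul a (br b c) + mul (br a c) b + mul (mul a b) (D c))
    (A B : Submodule F P)
    (hA : ∀ x ∈ A, ∀ y ∈ A, mul x y = 0 ∧ br x y = 0)
    (hB : ∀ x ∈ B, ∀ y ∈ B, mul x y = 0 ∧ br x y = 0)
    (hsum : ∀ p : P, ∃ a ∈ A, ∃ b ∈ B, p = a + b)
    :
    ∀ c₁ c₂ c₃ c₄ : P, br (mul c₁ c₂) (br c₃ c₄) = 0 := by
  have mA : ∀ x ∈ A, ∀ y ∈ A, mul x y = 0 := fun x hx y hy => (hA x hx y hy).1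
  have bA : ∀ x ∈ A, ∀ y ∈ A, br x y = 0 := fun x hx y hy => (hA x hx y hy).2
  have mB : ∀ x ∈ B, ∀ y ∈ B, mul x y = 0 := fun x hx y hy => (hB x hx y hy).1
  have bB : ∀ x ∈ B, ∀ y ∈ B, br x y = 0 := fun x hx y hy => (hB x hx y hy).2
  -- From [x·y, c] = 0 for x,y ∈ A: x·[y,c] = -y·[x,c]
  have L1 : ∀ x ∈ A, ∀ y ∈ A, ∀ c : P, mul x (br y c) = - mul y (br x c) := by
    intro x hx y hy c
    have h := hGP x y c
    rw [mA x hx y hy] at h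
    simp only [map_zero, LinearMap.zero_apply, add_zero] at h
    rw [hcomm (br x c) y] at h
    rw [eq_neg_iff_add_eq_zero]
    exact h.symm
  have L2 : ∀ x ∈ B, ∀ y ∈ B, ∀ c : P, mul x (br y c) = - mul y (br x c) := by
    intro x hx y hy c
    have h := hGP x y c
    rw [mB x hx y hy] at h
    simp only [map_zero, LinearMap.zero_apply, add_zero] at h
    rw [hcomm (br x c) y] at h
    rw [eq_neg_iff_add_eq_zero]
    exact h.symm
  -- triple products vanish
  have tAB : ∀ x ∈ A, ∀ y ∈ B, ∀ z : P, mul (mul x y) z = 0 := by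
    intro x hx y hy z
    obtain ⟨za, hza, zb, hzb, rfl⟩ := hsum z
    have h1 : mul (mul x y) za = 0 := by
      rw [hcomm x y, hassoc, mA x hx za hza, map_zero]
    have h2 : mul (mul x y) zb = 0 := by
      rw [hassoc, mB y hy zb hzb, map_zero]
    rw [map_add, h1, h2, add_zero]
  have triple : ∀ p q r : P, mul (mul p q) r = 0 := by
    intro p q r
    obtain ⟨pa, hpa, pb, hpb, rfl⟩ := hsum p
    obtain ⟨qa, hqa, qb, hqb, rfl⟩ := hsum q
    have hm : mul (pa + pb) (qa + qb) = mul pa qb + mul pb qa := by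
      simp only [map_add, LinearMap.add_apply, mA pa hpa qa hqa, mB pb hpb qb hqb]
      abel
    rw [hm, map_add, LinearMap.add_apply, tAB pa hpa qb hqb r, hcomm pb qa,
      tAB qa hqa pb hpb r, add_zero]
  -- key mixed case
  have K : ∀ a ∈ A, ∀ b ∈ B, ∀ a' ∈ A, ∀ b' ∈ B, br (mul a b) (br a' b') = 0 := by
    intro a ha b hb a' ha' b' hb'
    have step1 : br (mul a b) (br a' b') =
        mul a (br b (br a' b')) + mul (br a (br a' b')) b := by
      rw [hGP, triple, add_zero]
    -- br b (br a' b') = br (br b a') b'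
    have jb : br b (br a' b') = br (br b a') b' := by
      have h := hjac a' b' b
      rw [bB b' hb' b hb] at h
      simp only [map_zero, LinearMap.zero_apply, add_zero, zero_add] at h
      -- h : br (br a' b') b + br (br b a') b' = 0
      rw [hanti b (br a' b'), neg_eq_iff_add_eq_zero]
      exact h
    -- br a (br a' b') = br (br b' a) a'
    have ja : br a (br a' b') = br (br b' a) a' := by
      have h := hjac a' b' a
      rw [bA a ha a' ha'] at h
      simp only [map_zero, LinearMap.zero_apply, add_zero, zero_add] at h
      -- h : br (br a' b') a + br (br b' a) a' = 0
      rw [hanti a (br a' b'), neg_eq_iff_add_eq_zero]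
      exact h
    rw [step1, jb, ja]
    set v := br b a' with hv
    set u := br b' a with hu
    obtain ⟨va, hva, vb, hvb, hvdef⟩ := hsum v
    obtain ⟨ua, hua, ub, hub, hudef⟩ := hsum u
    have e1 : mul a (br v b') = mul va u := by
      rw [hvdef, map_add, LinearMap.add_apply, bB vb hvb b' hb', add_zero,
        L1 a ha va hva b', hanti a b', ← hu, map_neg, neg_neg]
    have e2 : mul (br u a') b = - mul ub v := by
      rw [hudef, map_add, LinearMap.add_apply, bA ua hua a' ha', zero_add,
        hcomm _ b, L2 b hb ub hub a', ← hv]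
    rw [e1, e2, hudef, hvdef, map_add, map_add, mA va hva ua hua,
      mB ub hub vb hvb, zero_add, add_zero, hcomm va ub]
    abel
  intro c₁ c₂ c₃ c₄
  obtain ⟨a1, ha1, b1, hb1, rfl⟩ := hsum c₁
  obtain ⟨a2, ha2, b2, hb2, rfl⟩ := hsum c₂
  obtain ⟨a3, ha3, b3, hb3, rfl⟩ := hsum c₃
  obtain ⟨a4, ha4, b4, hb4, rfl⟩ := hsum c₄
  have hm : mul (a1 + b1) (a2 + b2) = mul a1 b2 + mul b1 a2 := by
    simp only [map_add, LinearMap.add_apply, mA a1 ha1 a2 ha2, mB b1 hb1 b2 hb2]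
    abel
  have hbr : br (a3 + b3) (a4 + b4) = br a3 b4 + br b3 a4 := by
    simp only [map_add, LinearMap.add_apply, bA a3 ha3 a4 ha4, bB b3 hb3 b4 hb4]
    abel
  have T1 := K a1 ha1 b2 hb2 a3 ha3 b4 hb4
  have T2 : br (mul a1 b2) (br b3 a4) = 0 := by
    rw [hanti b3 a4, map_neg, K a1 ha1 b2 hb2 a4 ha4 b3 hb3, neg_zero]
  have T3 : br (mul b1 a2) (br a3 b4) = 0 := by
    rw [hcomm b1 a2]; exact K a2 ha2 b1 hb1 a3 ha3 b4 hb4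
  have T4 : br (mul b1 a2) (br b3 a4) = 0 := by
    rw [hcomm b1 a2, hanti b3 a4, map_neg, K a2 ha2 b1 hb1 a4 ha4 b3 hb3, neg_zero]
  rw [hm, hbr]
  simp only [map_add, LinearMap.add_apply, T1, T2, T3, T4, add_zero, zero_add]
end

section
/- Let F be a field of characteristic 0 and let P be a generalized Poisson algebra over F: a commutative associative product ·, a Lie bracket [,], and an F-linear derivation D of both products satisfying [a·b,c] = a·[b,c] + [a,c]·b + a·b·D(c) for all a,b,c ∈ P. Let A and B be abelian subalgebras of P (x·y = 0 and [x,y] = 0 for all x,y in A, and likewise in B), and suppose P = A + B. Then [c₁,c₂]·[c₃,c₄] = 0 for all c₁,c₂,c₃,c₄ ∈ P. -/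
theorem stmt_17 (F : Type*) [Field F] [CharZero F]
    (P : Type*) [AddCommGroup P] [Module F P]
    (mul br : P →ₗ[F] P →ₗ[F] P) (D : P →ₗ[F] P)
    (hcomm : ∀ a b : P, mul a b = mul b a)
    (hassoc : ∀ a b c : P, mul (mul a b) c = mul a (mul b c))
    (hanti : ∀ a b : P, br a b = - br b a)
    (hjac : ∀ a b c : P, br (br a b) c + br (br b c) a + br (br c a) b = 0)
    (hDmul : ∀ a b : P, D (mul a b) = mul (D a) b + mul a (D b))
    (hDbr : ∀ a b : P, D (br a b) = br (D a) b + br a (D b))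
    (hGP : ∀ a b c : P, br (mul a b) c =
      mul a (br b c) + mul (br a c) b + mul (mul a b) (D c))
    (A B : Submodule F P)
    (hA : ∀ x ∈ A, ∀ y ∈ A, mul x y = 0 ∧ br x y = 0)
    (hB : ∀ x ∈ B, ∀ y ∈ B, mul x y = 0 ∧ br x y = 0)
    (hsum : ∀ p : P, ∃ a ∈ A, ∃ b ∈ B, p = a + b)
    :
    ∀ c₁ c₂ c₃ c₄ : P, mul (br c₁ c₂) (br c₃ c₄) = 0 := by
  -- zero-product lemma: if x·y = 0 then x·[y,c] = -y·[x,c]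
  have zp : ∀ x y : P, mul x y = 0 → ∀ c : P, mul x (br y c) = - mul y (br x c) := by
    intro x y h c
    have h1 := hGP x y c
    rw [h] at h1
    simp only [map_zero, LinearMap.zero_apply, add_zero] at h1
    -- h1 : 0 = mul x (br y c) + mul (br x c) y
    linear_combination (norm := module) -h1 - hcomm (br x c) y
  have key : ∀ a ∈ A, ∀ b ∈ B, ∀ a' ∈ A, ∀ b' ∈ B,
      mul (br a b) (br a' b') = 0 := by
    intro a ha b hb a' ha' b' hb'
    obtain ⟨α₂, hα₂, β₂, hβ₂, hw⟩ := hsum (br a b')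
    obtain ⟨α₃, hα₃, β₃, hβ₃, hw3⟩ := hsum (br a' b)
    -- Jacobi: [[a',b'],b] = [[a',b],b'] = [α₃,b']
    have e1 : br (br a' b') b = br α₃ b' := by
      have hj := hjac a' b b'
      rw [(hB b hb b' hb').2, hanti b' a'] at hj
      simp only [map_zero, LinearMap.zero_apply, add_zero, map_neg,
        LinearMap.neg_apply] at hj
      have e1' : br (br a' b) b' = br α₃ b' := by
        rw [hw3]
        simp only [map_add, LinearMap.add_apply, (hB β₃ hβ₃ b' hb').2, add_zero]
      linear_combination (norm := module) e1' - hj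
    -- [[a,b'],b] = [α₂,b]
    have e3 : br (br a b') b = br α₂ b := by
      rw [hw]
      simp only [map_add, LinearMap.add_apply, (hB β₂ hβ₂ b hb).2, add_zero]
    -- m1 : a·[[a',b'],b] = -α₃·β₂
    have m1 : mul a (br (br a' b') b) = - mul α₃ β₂ := by
      rw [e1, zp a α₃ (hA a ha α₃ hα₃).1 b', hw]
      simp only [map_add, (hA α₃ hα₃ α₂ hα₂).1, zero_add]
    -- t2 : a'·[[a,b'],b] = -α₂·β₃
    have t2 : mul a' (br (br a b') b) = - mul α₂ β₃ := by
      rw [e3, zp a' α₂ (hA a' ha' α₂ hα₂).1 b, hw3]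
      simp only [map_add, (hA α₂ hα₂ α₃ hα₃).1, zero_add]
    -- t3 : [a',b]·[a,b'] = α₃·β₂ + β₃·α₂
    have t3 : mul (br a' b) (br a b') = mul α₃ β₂ + mul β₃ α₂ := by
      rw [hw3, hw]
      simp only [map_add, LinearMap.add_apply, (hA α₃ hα₃ α₂ hα₂).1,
        (hB β₃ hβ₃ β₂ hβ₂).1, zero_add, add_zero]
      abel
    -- h4 : a·[a',b'] = -(a'·[a,b'])
    have h4 : mul a (br a' b') = - mul a' (br a b') := zp a a' (hA a ha a' ha').1 b'
    have g5 := hGP a (br a' b') b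
    have g6 := hGP a' (br a b') b
    rw [h4] at g5
    simp only [map_neg, LinearMap.neg_apply] at g5
    -- g5 : -(br (mul a' (br a b')) b)
    --        = mul a (br (br a' b') b) + mul (br a b) (br a' b')
    --          + -(mul (mul a' (br a b')) (D b))
    linear_combination (norm := module) -g5 - g6 - m1 - t2 - t3 - hcomm β₃ α₂
  -- now the general statement
  intro c₁ c₂ c₃ c₄
  obtain ⟨a₁, ha₁, b₁, hb₁, rfl⟩ := hsum c₁
  obtain ⟨a₂, ha₂, b₂, hb₂, rfl⟩ := hsum c₂
  obtain ⟨a₃, ha₃, b₃, hb₃, rfl⟩ := hsum c₃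
  obtain ⟨a₄, ha₄, b₄, hb₄, rfl⟩ := hsum c₄
  have e12 : br (a₁ + b₁) (a₂ + b₂) = br a₁ b₂ + - br a₂ b₁ := by
    simp only [map_add, LinearMap.add_apply]
    rw [(hA a₁ ha₁ a₂ ha₂).2, (hB b₁ hb₁ b₂ hb₂).2, hanti b₁ a₂]
    abel
  have e34 : br (a₃ + b₃) (a₄ + b₄) = br a₃ b₄ + - br a₄ b₃ := by
    simp only [map_add, LinearMap.add_apply]
    rw [(hA a₃ ha₃ a₄ ha₄).2, (hB b₃ hb₃ b₄ hb₄).2, hanti b₃ a₄]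
    abel
  rw [e12, e34]
  simp only [map_add, map_neg, LinearMap.add_apply, LinearMap.neg_apply,
    key a₁ ha₁ b₂ hb₂ a₃ ha₃ b₄ hb₄, key a₁ ha₁ b₂ hb₂ a₄ ha₄ b₃ hb₃,
    key a₂ ha₂ b₁ hb₁ a₃ ha₃ b₄ hb₄, key a₂ ha₂ b₁ hb₁ a₄ ha₄ b₃ hb₃,
    neg_zero, add_zero, neg_neg, zero_add]
end

section
/- Let F be a field of characteristic 0 and let (A,·,[,],D) be both a generalized Poisson algebra and a transposed Poisson algebra over F: · is commutative and associative, [,] is a Lie bracket, D is an F-linear derivation of both products, and both [a·b,c] = a·[b,c] + [a,c]·b + a·b·D(c) and 2 a·[b,c] = [a·b,c] + [b,a·c] hold for all a,b,c ∈ A. Then the single multiplication a ⋆ b = a·b + [a,b] satisfies the identity 3((a⋆b)⋆c − a⋆(b⋆c)) = (a⋆c)⋆b + (b⋆c)⋆a − (b⋆a)⋆c − (c⋆a)⋆b + 4(a·b)·D(c) + 2D(a)·(b·c) for all a,b,c ∈ A. -/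
theorem stmt_19 (F : Type*) [Field F] [CharZero F]
    (A : Type*) [AddCommGroup A] [Module F A]
    (mul br : A →ₗ[F] A →ₗ[F] A) (D : A →ₗ[F] A)
    (hcomm : ∀ a b : A, mul a b = mul b a)
    (hassoc : ∀ a b c : A, mul (mul a b) c = mul a (mul b c))
    (hanti : ∀ a b : A, br a b = - br b a)
    (hjac : ∀ a b c : A, br (br a b) c + br (br b c) a + br (br c a) b = 0)
    (hDmul : ∀ a b : A, D (mul a b) = mul (D a) b + mul a (D b))
    (hDbr : ∀ a b : A, D (br a b) = br (D a) b + br a (D b))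
    (hGP : ∀ a b c : A, br (mul a b) c =
      mul a (br b c) + mul (br a c) b + mul (mul a b) (D c))
    (hTP : ∀ a b c : A, (2 : F) • mul a (br b c) = br (mul a b) c + br b (mul a c))
    (star : A → A → A)
    (hstar : ∀ a b : A, star a b = mul a b + br a b) :
    ∀ a b c : A, (3 : F) • (star (star a b) c - star a (star b c)) =
      star (star a c) b + star (star b c) a - star (star b a) c - star (star c a) b
      + (4 : F) • mul (mul a b) (D c) + (2 : F) • mul (D a) (mul b c) := by
  intro a b c
  have hlc : ∀ x y z : A, mul x (mul y z) = mul y (mul x z) := by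
    intro x y z; rw [← hassoc, hcomm x y, hassoc]
  have h2 : ∀ x y z : A, br x (mul y z)
      = mul y (br x z) + mul (br x y) z - mul (mul y z) (D x) := by
    intro x y z
    rw [hanti, hGP, hanti z x, hanti y x, map_neg, map_neg, LinearMap.neg_apply]
    abel
  have e1 : br a (br b c) = - br (br b c) a := hanti _ _
  have e2 : br (br b a) c = - br (br a b) c := by
    rw [hanti b a, map_neg, LinearMap.neg_apply]
  have e3 : br (br c a) b = - br (br a c) b := by
    rw [hanti c a, map_neg, LinearMap.neg_apply]
  have e4 : br (br a c) b = br (br a b) c + br (br b c) a := by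
    have h := hjac a b c
    rw [e3] at h
    have h' : br (br a b) c + br (br b c) a - br (br a c) b = 0 := by
      rw [← h]; abel
    exact (sub_eq_zero.mp h').symm
  have s2 : ∀ x : A, (2 : F) • x = x + x := by
    intro x; rw [show (2 : F) = 1 + 1 by norm_num, add_smul, one_smul]
  have s3 : ∀ x : A, (3 : F) • x = x + x + x := by
    intro x; rw [show (3 : F) = 1 + 1 + 1 by norm_num, add_smul, add_smul, one_smul]
  have s4 : ∀ x : A, (4 : F) • x = x + x + x + x := by
    intro x
    rw [show (4 : F) = 1 + 1 + 1 + 1 by norm_num, add_smul, add_smul, add_smul, one_smul]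
  simp only [hstar, map_add, LinearMap.add_apply, hGP, h2, e1, e2, e3, e4, s2, s3, s4,
    hcomm, hassoc, hlc]
  abel
end
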